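/- Let r ≥ 1, let ψ : ℝ^r → ℝ be twice continuously differentiable with ψ(𝟏) = 1, let β ∈ ℝ^r, γ ≥ 0, α_S > 0, α_I > 0, α_R ≥ 0 with α_S + α_I + α_R = 1, and T > 0. For x with ∂_iψ(x) ≠ 0 for all i, define κ̄_{jl}(x) = ψ(x)·∂²_{jl}ψ(x)/(∂_jψ(x)·∂_lψ(x)). Suppose S : [0,T] → ℝ, SI, SS, Θ : [0,T] → ℝ^r satisfy, for all t ∈ [0,T] and all j: S(t) > 0, ψ(Θ(t)) > 0, ∂_jψ(Θ(t)) ≠ 0, ∂_jψ(𝟏) > 0, and S'(t) = −∑_l β_l·SI_l(t), SI_j'(t) = ∑_l β_l·κ̄_{jl}(Θ(t))·(SI_l(t)/S(t))·(SS_j(t) − SI_j(t)) − (β_j + γ)·SI_j(t), SS_j'(t) = −2·∑_l β_l·κ̄_{jl}(Θ(t))·SI_l(t)·SS_j(t)/S(t), Θ_j'(t) = −β_j·SI_j(t)/(α_S·∂_jψ(Θ(t))), with initial conditions S(0) = α_S, SI_j(0) = α_S·α_I·∂_jψ(𝟏), SS_j(0) = α_S²·∂_jψ(𝟏), Θ(0)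 = 𝟏. Then for all t ∈ [0,T] and all j, Θ_j'(t) = −β_j·Θ_j(t) + β_j·α_S·∂_jψ(Θ(t))/∂_jψ(𝟏) + γ·(1 − Θ_j(t)) + β_j·α_R. -/

import Mathlib

/-- Partial derivative of `ψ : (Fin r → ℝ) → ℝ` in the `j`-th coordinate at `x`. -/
noncomputable def pd {r : ℕ} (j : Fin r) (ψ : (Fin r → ℝ) → ℝ) (x : Fin r → ℝ) : ℝ :=
  deriv (fun t => ψ (Function.update x j t)) (x j)


lemma pd_hasDerivAt {r : ℕ} {ψ : (Fin r → ℝ) → ℝ} {x : Fin r → ℝ} (j : Fin r)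
    (h : DifferentiableAt ℝ ψ x) :
    HasDerivAt (fun t => ψ (Function.update x j t)) (fderiv ℝ ψ x (Pi.single j 1)) (x j) := by
  have hu : HasDerivAt (fun s => Function.update x j s) (Pi.single j (1:ℝ)) (x j) := hasDerivAt_update x j (x j)
  have hψ : HasFDerivAt ψ (fderiv ℝ ψ x) (Function.update x j (x j)) := by
    rw [Function.update_eq_self]; exact h.hasFDerivAt
  exact hψ.comp_hasDerivAt (x j) hu

lemma pd_eq_fderiv {r : ℕ} {ψ : (Fin r → ℝ) → ℝ} {x : Fin r → ℝ} (j : Fin r)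
    (h : DifferentiableAt ℝ ψ x) :
    pd j ψ x = fderiv ℝ ψ x (Pi.single j 1) :=
  (pd_hasDerivAt j h).deriv

/-- Chain rule: derivative of `f ∘ Θ` in terms of partial derivatives. -/
lemma chain_pd {r : ℕ} {f : (Fin r → ℝ) → ℝ} (hf : ContDiff ℝ 1 f)
    {Θ : ℝ → Fin r → ℝ} {V : Fin r → ℝ} {t : ℝ} (hΘ : HasDerivAt Θ V t) :
    HasDerivAt (fun s => f (Θ s)) (∑ l, pd l f (Θ t) * V l) t := by
  have hd : DifferentiableAt ℝ f (Θ t) := (hf.differentiable one_ne_zero) (Θ t)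
  have h := hd.hasFDerivAt.comp_hasDerivAt t hΘ
  have heq : (fderiv ℝ f (Θ t)) V = ∑ l, pd l f (Θ t) * V l := by
    conv_lhs => rw [← Finset.univ_sum_single V]
    rw [map_sum]
    refine Finset.sum_congr rfl fun l _ => ?_
    have h2 : (Pi.single l (V l) : Fin r → ℝ) = (V l) • (Pi.single l 1 : Fin r → ℝ) := by
      ext i; by_cases h : i = l <;> simp [h, Pi.single_apply]
    rw [h2, map_smul, pd_eq_fderiv l hd, smul_eq_mul, mul_comm]
  exact heq ▸ h

/-- A function with derivative `h t * f t` on `[0,T]` and `f 0 = 0` vanishes (Grönwall). -/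
lemma zero_of_selfBound {f h : ℝ → ℝ} {T : ℝ}
    (hf : ∀ t ∈ Set.Icc (0:ℝ) T, HasDerivAt f (h t * f t) t)
    (hh : ContinuousOn h (Set.Icc (0:ℝ) T)) (hf0 : f 0 = 0) :
    ∀ t ∈ Set.Icc (0:ℝ) T, f t = 0 := by
  obtain ⟨C, hC⟩ := (isCompact_Icc (a := (0:ℝ)) (b := T)).exists_bound_of_continuousOn hh
  have hcont : ContinuousOn f (Set.Icc 0 T) := fun t ht =>
    (hf t ht).continuousAt.continuousWithinAt
  have key := norm_le_gronwallBound_of_norm_deriv_right_le (f := f)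
    (f' := fun t => h t * f t) (δ := 0) (K := C) (ε := 0) (a := 0) (b := T) hcont
    (fun x hx => (hf x (Set.Ico_subset_Icc_self hx)).hasDerivWithinAt)
    (by simp [hf0]) ?_
  · intro t ht
    have := key t ht
    rw [gronwallBound_ε0_δ0] at this
    have : ‖f t‖ ≤ 0 := this
    simpa using le_antisymm this (norm_nonneg _)
  · intro x hx
    rw [norm_mul, add_zero]
    have h1 : ‖h x‖ ≤ C := hC x (Set.Ico_subset_Icc_self hx)
    exact mul_le_mul_of_nonneg_right h1 (norm_nonneg _)

/-- Corollary 1 (static multilayer graph): the large graph limit of the stochastic SIR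
process with multiple modes of transmission is equivalent to the Miller–Volz edge-based
model; the per-layer no-transmission probabilities `Θⱼ` satisfy
`Θⱼ' = −βⱼΘⱼ + βⱼα_S·∂ⱼψ(Θ)/∂ⱼψ(𝟏) + γ(1−Θⱼ) + βⱼα_R`.
Here `κ̄_{jl}(x) = ψ(x)·∂²_{jl}ψ(x)/(∂ⱼψ(x)·∂ₗψ(x))`. -/
theorem edge_based_equivalence (r : ℕ) (hr : 1 ≤ r) (ψ : (Fin r → ℝ) → ℝ)
    (hC : ContDiff ℝ 2 ψ) (hψ1 : ψ (fun _ => 1) = 1)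
    (β : Fin r → ℝ) (γ αS αI αR : ℝ) (hγ : 0 ≤ γ)
    (hαS : 0 < αS) (hαI : 0 < αI) (hαR : 0 ≤ αR) (hsum : αS + αI + αR = 1)
    (T : ℝ) (hT : 0 < T)
    (S : ℝ → ℝ) (SI SS : ℝ → Fin r → ℝ) (Θ : ℝ → Fin r → ℝ)
    (hSpos : ∀ t ∈ Set.Icc (0 : ℝ) T, 0 < S t)
    (hψpos : ∀ t ∈ Set.Icc (0 : ℝ) T, 0 < ψ (Θ t))
    (hpdne : ∀ t ∈ Set.Icc (0 : ℝ) T, ∀ j, pd j ψ (Θ t) ≠ 0)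
    (hpd1 : ∀ j : Fin r, 0 < pd j ψ (fun _ => 1))
    (hS : ∀ t ∈ Set.Icc (0 : ℝ) T, HasDerivAt S (-(∑ l, β l * SI t l)) t)
    (hSI : ∀ t ∈ Set.Icc (0 : ℝ) T, ∀ j, HasDerivAt (fun s => SI s j)
        ((∑ l, β l * (ψ (Θ t) * pd l (pd j ψ) (Θ t) / (pd j ψ (Θ t) * pd l ψ (Θ t)))
            * (SI t l / S t) * (SS t j - SI t j)) - (β j + γ) * SI t j) t)
    (hSS : ∀ t ∈ Set.Icc (0 : ℝ) T, ∀ j, HasDerivAt (fun s => SS s j)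
        (-2 * ∑ l, β l * (ψ (Θ t) * pd l (pd j ψ) (Θ t) / (pd j ψ (Θ t) * pd l ψ (Θ t)))
            * SI t l * SS t j / S t) t)
    (hΘ : ∀ t ∈ Set.Icc (0 : ℝ) T, ∀ j, HasDerivAt (fun s => Θ s j)
        (-(β j * SI t j) / (αS * pd j ψ (Θ t))) t)
    (hS0 : S 0 = αS)
    (hSI0 : ∀ j, SI 0 j = αS * αI * pd j ψ (fun _ => 1))
    (hSS0 : ∀ j, SS 0 j = αS ^ 2 * pd j ψ (fun _ => 1))
    (hΘ0 : Θ 0 = fun _ => 1) :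
    ∀ t ∈ Set.Icc (0 : ℝ) T, ∀ j, HasDerivAt (fun s => Θ s j)
      (-(β j * Θ t j) + β j * αS * pd j ψ (Θ t) / pd j ψ (fun _ => 1)
        + γ * (1 - Θ t j) + β j * αR) t := by
  have hαS' : αS ≠ 0 := ne_of_gt hαS
  have hψd : Differentiable ℝ ψ := hC.differentiable (by norm_num)
  have hψC1 : ContDiff ℝ 1 ψ := hC.of_le (by norm_num)
  have hpdeq : ∀ j : Fin r, pd j ψ = fun y => fderiv ℝ ψ y (Pi.single j 1) :=
    fun j => funext fun y => pd_eq_fderiv j (hψd y)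
  have hpdC : ∀ j : Fin r, ContDiff ℝ 1 (pd j ψ) := by
    intro j; rw [hpdeq j]
    exact (hC.fderiv_right (by norm_num)).clm_apply contDiff_const
  have hΘv : ∀ t ∈ Set.Icc (0:ℝ) T,
      HasDerivAt Θ (fun l => -(β l * SI t l) / (αS * pd l ψ (Θ t))) t :=
    fun t ht => hasDerivAt_pi.2 fun l => hΘ t ht l
  have hΘcont : ContinuousOn Θ (Set.Icc 0 T) :=
    fun t ht => (hΘv t ht).continuousAt.continuousWithinAt
  have hSIcont : ∀ l : Fin r, ContinuousOn (fun s => SI s l) (Set.Icc 0 T) :=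
    fun l t ht => (hSI t ht l).continuousAt.continuousWithinAt
  have hPcont : ∀ j : Fin r, ContinuousOn (fun s => pd j ψ (Θ s)) (Set.Icc 0 T) :=
    fun j => ((hpdC j).continuous).comp_continuousOn hΘcont
  have hAcont : ∀ j l : Fin r, Continuous (pd l (pd j ψ)) := by
    intro j l
    have h1 : pd l (pd j ψ) = fun y => fderiv ℝ (pd j ψ) y (Pi.single l 1) :=
      funext fun y => pd_eq_fderiv l (((hpdC j).differentiable one_ne_zero) y)
    rw [h1]
    exact ((hpdC j).continuous_fderiv one_ne_zero).clm_apply continuous_const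
  -- Identity 1 : S t = αS * ψ (Θ t)
  have hSid : ∀ t ∈ Set.Icc (0:ℝ) T, S t = αS * ψ (Θ t) := by
    have hG : ∀ t ∈ Set.Icc (0:ℝ) T, HasDerivAt (fun s => S s - αS * ψ (Θ s))
        ((fun _ => (0:ℝ)) t * (S t - αS * ψ (Θ t))) t := by
      intro t ht
      have hc := (chain_pd hψC1 (hΘv t ht)).const_mul αS
      have hd := (hS t ht).sub hc
      convert hd using 1
      · rfl
      · rfl
      · rfl
      have hterm : ∀ l ∈ Finset.univ, pd l ψ (Θ t) *
          (-(β l * SI t l) / (αS * pd l ψ (Θ t))) = -(β l * SI t l) / αS := by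
        intro l _
        have := hpdne t ht l
        field_simp
      rw [Finset.sum_congr rfl hterm, ← Finset.sum_div, zero_mul]
      rw [mul_div_cancel₀ _ hαS']
      simp [Finset.sum_neg_distrib]
    have h0 : (fun s => S s - αS * ψ (Θ s)) 0 = 0 := by simp [hS0, hΘ0, hψ1]
    have hz := zero_of_selfBound hG continuousOn_const h0
    intro t ht
    have := hz t ht
    linarith
  -- Identity 2 : SS t j = αS² (∂ⱼψ(Θ t))² / ∂ⱼψ(1)
  have hSSid : ∀ j : Fin r, ∀ t ∈ Set.Icc (0:ℝ) T,
      SS t j = αS^2 * (pd j ψ (Θ t))^2 / pd j ψ (fun _ => 1) := by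
    intro j
    have hcne : pd j ψ (fun _ => 1) ≠ 0 := ne_of_gt (hpd1 j)
    have hhcont : ContinuousOn (fun s => 2 * (∑ l, pd l (pd j ψ) (Θ s) *
        (-(β l * SI s l) / (αS * pd l ψ (Θ s)))) / pd j ψ (Θ s)) (Set.Icc 0 T) := by
      apply ContinuousOn.div _ (hPcont j) (fun t ht => hpdne t ht j)
      apply ContinuousOn.mul continuousOn_const
      apply continuousOn_finset_sum
      intro l _
      exact ((hAcont j l).comp_continuousOn hΘcont).mul
        ((ContinuousOn.neg (continuousOn_const.mul (hSIcont l))).div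
          (continuousOn_const.mul (hPcont l))
          (fun t ht => mul_ne_zero hαS' (hpdne t ht l)))
    have hH : ∀ t ∈ Set.Icc (0:ℝ) T, HasDerivAt
        (fun s => SS s j - αS^2 * (pd j ψ (Θ s))^2 / pd j ψ (fun _ => 1))
        ((fun s => 2 * (∑ l, pd l (pd j ψ) (Θ s) *
            (-(β l * SI s l) / (αS * pd l ψ (Θ s)))) / pd j ψ (Θ s)) t *
          (SS t j - αS^2 * (pd j ψ (Θ t))^2 / pd j ψ (fun _ => 1))) t := by
      intro t ht
      have hP := chain_pd (hpdC j) (hΘv t ht)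
      have hP2 := ((hP.pow 2).const_mul (αS^2)).div_const (pd j ψ (fun _ => 1))
      have hd := (hSS t ht j).sub hP2
      convert hd using 1
      · rfl
      · rfl
      · rfl
      rw [hSid t ht, mul_sub]
      congr 1
      · -- h t * SS t j = -2 * ∑ ...
        have hsum2 : ∀ l ∈ Finset.univ,
            β l * (ψ (Θ t) * pd l (pd j ψ) (Θ t) / (pd j ψ (Θ t) * pd l ψ (Θ t)))
              * SI t l * SS t j / (αS * ψ (Θ t)) =
            -(pd l (pd j ψ) (Θ t) * (-(β l * SI t l) / (αS * pd l ψ (Θ t)))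
              * SS t j / pd j ψ (Θ t)) := by
          intro l _
          have h1 := hpdne t ht j
          have h2 := hpdne t ht l
          have h3 := ne_of_gt (hψpos t ht)
          field_simp
        rw [Finset.sum_congr rfl hsum2, Finset.sum_neg_distrib, ← Finset.sum_div,
          ← Finset.sum_mul]
        ring
      · -- h t * (αS² P²/c) = αS² * (2 P P')/c
        have h1 := hpdne t ht j
        field_simp
        ring
    have h0 : (fun s => SS s j - αS^2 * (pd j ψ (Θ s))^2 / pd j ψ (fun _ => 1)) 0 = 0 := by
      simp only [hΘ0, hSS0 j]
      field_simp
      ring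
    have hz := zero_of_selfBound hH hhcont h0
    intro t ht
    have := hz t ht
    linarith
  -- Final computation
  intro t ht j
  have hcne : pd j ψ (fun _ => 1) ≠ 0 := ne_of_gt (hpd1 j)
  have hE : ∀ s ∈ Set.Icc (0:ℝ) T,
      β j * (SI s j / (αS * pd j ψ (Θ s))) - β j * Θ s j
        + β j * αS * pd j ψ (Θ s) / pd j ψ (fun _ => 1)
        + γ * (1 - Θ s j) + β j * αR = 0 := by
    have hder : ∀ s ∈ Set.Icc (0:ℝ) T, HasDerivAt
        (fun s => β j * (SI s j / (αS * pd j ψ (Θ s))) - β j * Θ s j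
          + β j * αS * pd j ψ (Θ s) / pd j ψ (fun _ => 1)
          + γ * (1 - Θ s j) + β j * αR)
        ((fun _ => (0:ℝ)) s * (β j * (SI s j / (αS * pd j ψ (Θ s))) - β j * Θ s j
          + β j * αS * pd j ψ (Θ s) / pd j ψ (fun _ => 1)
          + γ * (1 - Θ s j) + β j * αR)) s := by
      intro s hs
      have hPder := chain_pd (hpdC j) (hΘv s hs)
      have hQ := (hSI s hs j).div (hPder.const_mul αS) (mul_ne_zero hαS' (hpdne s hs j))
      have hΘj := hΘ s hs j
      have h1 := hQ.const_mul (β j)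
      have h2 := hΘj.const_mul (β j)
      have h3 := (hPder.const_mul (β j * αS)).div_const (pd j ψ (fun _ => 1))
      have h4 := ((hasDerivAt_const s (1:ℝ)).sub hΘj).const_mul γ
      have hd := (((h1.sub h2).add h3).add h4).add_const (β j * αR)
      convert hd using 1
      · rfl
      · rfl
      · rfl
      rw [hSid s hs, hSSid j s hs]
      have hsum1 : ∑ l, β l * (ψ (Θ s) * pd l (pd j ψ) (Θ s) /
            (pd j ψ (Θ s) * pd l ψ (Θ s))) * (SI s l / (αS * ψ (Θ s))) *
            (αS^2 * (pd j ψ (Θ s))^2 / pd j ψ (fun _ => 1) - SI s j) =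
          -((αS^2 * (pd j ψ (Θ s))^2 / pd j ψ (fun _ => 1) - SI s j) / pd j ψ (Θ s)) *
            (∑ l, pd l (pd j ψ) (Θ s) * (-(β l * SI s l) / (αS * pd l ψ (Θ s)))) := by
        rw [Finset.mul_sum]
        refine Finset.sum_congr rfl fun l _ => ?_
        have h1 := hpdne s hs j
        have h2 := hpdne s hs l
        have h3 := ne_of_gt (hψpos s hs)
        field_simp
      rw [hsum1]
      have h1 := hpdne s hs j
      field_simp
      ring
    have h0 : (fun s => β j * (SI s j / (αS * pd j ψ (Θ s))) - β j * Θ s j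
          + β j * αS * pd j ψ (Θ s) / pd j ψ (fun _ => 1)
          + γ * (1 - Θ s j) + β j * αR) 0 = 0 := by
      simp only [hΘ0, hSI0 j]
      field_simp
      linear_combination (β j) * hsum
    exact zero_of_selfBound hder continuousOn_const h0
  have h := hΘ t ht j
  convert h using 1
  have hEt := hE t ht
  have hm : -(β j * SI t j) / (αS * pd j ψ (Θ t)) =
      -(β j * (SI t j / (αS * pd j ψ (Θ t)))) := by ring
  rw [hm]
  linarith
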